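/- arXiv:2303.08100 — 2 statements merged into one kernel-verified Lean document; each statement's English description precedes it below -/
import Mathlib

section
/- The discriminant of the n-th Taylor polynomial of the exponential function, f_n(x) = ∑_{k=0}^{n} x^k/k!, equals (-1)^{n(n-1)/2}·(n!)^n. -/
open Polynomial

/-- The discriminant of a polynomial over `ℚ`, via the product of squared differences of
its complex roots (monic convention). -/
noncomputable def polyDisc (f : Polynomial ℚ) : ℂ :=
  let l := ((f.map (algebraMap ℚ ℂ)).roots).toList
  ∏ q ∈ (Finset.range l.length ×ˢ Finset.range l.length).filter (fun q => q.1 < q.2),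
    (l.getD q.1 0 - l.getD q.2 0) ^ 2

namespace DiscTaylorAux

open Finset

@[to_additive]
lemma prod_filter_lt {M : Type*} [CommMonoid M] (N : ℕ) (f : ℕ × ℕ → M) :
    ∏ q ∈ (range N ×ˢ range N).filter (fun q => q.1 < q.2), f q =
      ∏ j ∈ range N, ∏ i ∈ range j, f (i, j) := by
  rw [Finset.prod_filter, Finset.prod_product_right]
  refine Finset.prod_congr rfl fun j hj => ?_
  rw [← Finset.prod_filter]
  refine Finset.prod_congr ?_ fun _ _ => rfl
  ext i
  simp only [Finset.mem_filter, Finset.mem_range] at *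
  omega

lemma prod_filter_ne {M : Type*} [CommMonoid M] (N : ℕ) (f : ℕ × ℕ → M) :
    ∏ q ∈ (range N ×ˢ range N).filter (fun q => q.1 ≠ q.2), f q =
      ∏ i ∈ range N, ∏ j ∈ (range N).erase i, f (i, j) := by
  rw [Finset.prod_filter, Finset.prod_product]
  refine Finset.prod_congr rfl fun i hi => ?_
  rw [← Finset.prod_filter]
  refine Finset.prod_congr ?_ fun _ _ => rfl
  rw [← Finset.filter_ne']
  ext j
  simp only [Finset.mem_filter, Finset.mem_range] at *
  tauto

lemma union_filters (N : ℕ) :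
    (range N ×ˢ range N).filter (fun q => q.1 < q.2) ∪
      (range N ×ˢ range N).filter (fun q => q.2 < q.1) =
      (range N ×ˢ range N).filter (fun q => q.1 ≠ q.2) := by
  rw [← Finset.filter_or]
  refine Finset.filter_congr fun q _ => ?_
  constructor
  · rintro (h | h) <;> omega
  · intro h; omega

lemma disjoint_filters (N : ℕ) :
    Disjoint ((range N ×ˢ range N).filter (fun q => q.1 < q.2))
      ((range N ×ˢ range N).filter (fun q => q.2 < q.1)) := by
  rw [Finset.disjoint_left]
  intro q hq hq'
  simp only [Finset.mem_filter] at hq hq'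
  omega

/-- Swap reindexing. -/
lemma prod_swap_lt {M : Type*} [CommMonoid M] (N : ℕ) (f : ℕ × ℕ → M) :
    ∏ q ∈ (range N ×ˢ range N).filter (fun q => q.1 < q.2), f (q.2, q.1) =
      ∏ q ∈ (range N ×ˢ range N).filter (fun q => q.2 < q.1), f q := by
  refine Finset.prod_nbij' Prod.swap Prod.swap ?_ ?_ ?_ ?_ ?_
  · intro q hq; simp only [Finset.mem_filter, Finset.mem_product, Finset.mem_range,
      Prod.fst_swap, Prod.snd_swap] at *; tauto
  · intro q hq; simp only [Finset.mem_filter, Finset.mem_product, Finset.mem_range,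
      Prod.fst_swap, Prod.snd_swap] at *; tauto
  · intro q _; simp
  · intro q _; simp
  · intro q _; rfl

/-- `eval` of the derivative of a product of `X - C (a j)`. -/
lemma eval_derivative_prod (s : Finset ℕ) (a : ℕ → ℂ) (i : ℕ) (hi : i ∈ s) :
    Polynomial.eval (a i) (Polynomial.derivative (∏ j ∈ s, (X - C (a j)))) =
      ∏ j ∈ s.erase i, (a i - a j) := by
  induction s using Finset.induction_on with
  | empty => exact absurd hi (Finset.notMem_empty i)
  | @insert k s hk ih =>
    rw [Finset.prod_insert hk, Polynomial.derivative_mul]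
    simp only [Polynomial.derivative_sub, Polynomial.derivative_X, Polynomial.derivative_C,
      sub_zero, one_mul, Polynomial.eval_add, Polynomial.eval_mul, Polynomial.eval_sub,
      Polynomial.eval_X, Polynomial.eval_C]
    rcases Finset.mem_insert.mp hi with rfl | his
    · rw [Finset.erase_insert hk]
      have : Polynomial.eval (a i) (∏ j ∈ s, (X - C (a j))) = ∏ j ∈ s, (a i - a j) := by
        rw [Polynomial.eval_prod]; simp
      rw [this, sub_self, zero_mul, add_zero]
    · have hik : i ≠ k := by rintro rfl; exact hk his
      have h0 : Polynomial.eval (a i) (∏ j ∈ s, (X - C (a j))) = 0 := by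
        rw [Polynomial.eval_prod]
        refine Finset.prod_eq_zero his ?_
        simp
      rw [h0, zero_add, ih his, Finset.erase_insert_of_ne hik.symm,
        Finset.prod_insert (fun h => hk (Finset.mem_of_mem_erase h))]

lemma list_prod_eq {M : Type*} [CommMonoid M] (l : List ℂ) (f : ℂ → M) :
    (l.map f).prod = ∏ i ∈ range l.length, f (l.getD i 0) := by
  induction l with
  | nil => simp
  | cons x t ih =>
    rw [List.map_cons, List.prod_cons, List.length_cons, Finset.prod_range_succ' _ t.length]
    simp only [List.getD_cons_succ, List.getD_cons_zero]
    rw [ih, mul_comm]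

end DiscTaylorAux

open DiscTaylorAux Finset in
/-- The discriminant of `f_n(x) = ∑ x^k/k!` is `(-1)^(n(n-1)/2) (n!)^n`. -/
theorem disc_taylor_exp (n : ℕ) (hn : 0 < n) :
    polyDisc (∑ k ∈ Finset.range (n + 1), C ((k.factorial : ℚ))⁻¹ * X ^ k) =
      (-1) ^ (n * (n - 1) / 2) * ((n.factorial : ℂ)) ^ n := by
  classical
  set P : Polynomial ℂ := ∑ k ∈ Finset.range (n + 1), C ((k.factorial : ℂ))⁻¹ * X ^ k with hP
  have hmap : (∑ k ∈ Finset.range (n + 1), C ((k.factorial : ℚ))⁻¹ * X ^ k).map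
      (algebraMap ℚ ℂ) = P := by
    rw [Polynomial.map_sum]
    refine Finset.sum_congr rfl fun k _ => ?_
    simp [Polynomial.map_mul, Polynomial.map_pow, map_inv₀]
  have hfact : ∀ k : ℕ, (k.factorial : ℂ) ≠ 0 := fun k => by
    exact_mod_cast Nat.cast_ne_zero.mpr k.factorial_ne_zero
  have hcoeff : ∀ m : ℕ, P.coeff m = if m ≤ n then ((m.factorial : ℂ))⁻¹ else 0 := by
    intro m
    rw [hP, Polynomial.finset_sum_coeff]
    simp only [Polynomial.coeff_C_mul, Polynomial.coeff_X_pow, mul_ite, mul_one, mul_zero]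
    rw [Finset.sum_ite_eq]
    simp only [Finset.mem_range]
    split_ifs with h1 h2 h2 <;> first | rfl | omega
  have hPn : P.coeff n = ((n.factorial : ℂ))⁻¹ := by rw [hcoeff]; simp
  have hP0 : P ≠ 0 := fun h => by
    rw [h, Polynomial.coeff_zero] at hPn
    exact inv_ne_zero (hfact n) hPn.symm
  have hdeg : P.natDegree = n := by
    refine le_antisymm (Polynomial.natDegree_le_iff_coeff_eq_zero.mpr fun m hm => ?_)
      (Polynomial.le_natDegree_of_ne_zero ?_)
    · rw [hcoeff]; simp [Nat.not_le.mpr hm]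
    · rw [hPn]; exact inv_ne_zero (hfact n)
  have hlead : P.leadingCoeff = ((n.factorial : ℂ))⁻¹ := by
    rw [Polynomial.leadingCoeff, hdeg, hPn]
  have hcard : Multiset.card P.roots = n := by
    rw [← hdeg]
    exact (Polynomial.splits_iff_card_roots.mp (IsAlgClosed.splits P))
  set l : List ℂ := P.roots.toList with hl
  have hlen : l.length = n := by rw [hl, Multiset.length_toList, hcard]
  set a : ℕ → ℂ := fun i => l.getD i 0 with ha
  set g : Polynomial ℂ := ∏ j ∈ Finset.range n, (X - C (a j)) with hg
  -- g = C n! * P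
  have hgP : g = C ((n.factorial : ℂ)) * P := by
    have h1 := Polynomial.C_leadingCoeff_mul_prod_multiset_X_sub_C (p := P) (by rw [hcard, hdeg])
    have h2 : (P.roots.map fun r => X - C r).prod = g := by
      rw [hg]
      have : P.roots = (l : Multiset ℂ) := by rw [hl, Multiset.coe_toList]
      rw [this]
      rw [Multiset.map_coe, Multiset.prod_coe]
      rw [list_prod_eq l (fun r => X - C r), hlen]
    rw [h2, hlead] at h1
    calc g = (C ((n.factorial : ℂ)) * C ((n.factorial : ℂ))⁻¹) * g := by
              rw [← Polynomial.C_mul, mul_inv_cancel₀ (hfact n)]; simp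
    _ = C ((n.factorial : ℂ)) * (C ((n.factorial : ℂ))⁻¹ * g) := by ring
    _ = C ((n.factorial : ℂ)) * P := by rw [h1]
  have hmem : ∀ i ∈ Finset.range n, a i ∈ P.roots := by
    intro i hi
    have hi' : i < l.length := by rw [hlen]; exact Finset.mem_range.mp hi
    have : a i ∈ l := by
      rw [ha]
      simp only []
      rw [List.getD_eq_getElem _ _ hi']
      exact List.getElem_mem _
    rwa [hl, Multiset.mem_toList] at this
  have hroot : ∀ i ∈ Finset.range n, P.eval (a i) = 0 := fun i hi =>
    Polynomial.isRoot_of_mem_roots (hmem i hi)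
  -- derivative identity
  have hderiv : Polynomial.derivative P = P - C ((n.factorial : ℂ))⁻¹ * X ^ n := by
    rw [hP, Polynomial.derivative_sum]
    have hterm : ∀ k : ℕ, Polynomial.derivative (C ((k.factorial : ℂ))⁻¹ * X ^ k) =
        C ((k.factorial : ℂ))⁻¹ * (C (k : ℂ) * X ^ (k - 1)) := by
      intro k
      rw [Polynomial.derivative_C_mul, Polynomial.derivative_X_pow]
    rw [Finset.sum_congr rfl fun k _ => hterm k]
    rw [Finset.sum_range_succ' _ n]
    have h0 : C (((0:ℕ).factorial : ℂ))⁻¹ * (C ((0:ℕ) : ℂ) * X ^ (0 - 1)) = 0 := by simp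
    rw [h0, add_zero]
    have hstep : ∀ k : ℕ, C (((k+1).factorial : ℂ))⁻¹ * (C ((k+1 : ℕ) : ℂ) * X ^ (k + 1 - 1)) =
        C ((k.factorial : ℂ))⁻¹ * X ^ k := by
      intro k
      have hk1 : ((k : ℂ) + 1) ≠ 0 := by
        have := Nat.cast_ne_zero (R := ℂ).mpr (Nat.succ_ne_zero k)
        push_cast at this
        exact this
      have : (((k+1).factorial : ℂ))⁻¹ * ((k+1 : ℕ) : ℂ) = ((k.factorial : ℂ))⁻¹ := by
        rw [Nat.factorial_succ]
        push_cast
        rw [mul_inv]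
        calc ((k:ℂ)+1)⁻¹ * ((k.factorial : ℂ))⁻¹ * ((k:ℂ)+1)
            = ((k.factorial : ℂ))⁻¹ * (((k:ℂ)+1)⁻¹ * ((k:ℂ)+1)) := by ring
          _ = ((k.factorial : ℂ))⁻¹ := by rw [inv_mul_cancel₀ hk1, mul_one]
      rw [Nat.add_sub_cancel, ← mul_assoc, ← Polynomial.C_mul, this]
    rw [Finset.sum_congr rfl fun k _ => hstep k]
    conv_rhs => rw [Finset.sum_range_succ _ n]
    ring
  have hderiv_eval : ∀ i ∈ Finset.range n, Polynomial.eval (a i) (Polynomial.derivative g) =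
      -(a i) ^ n := by
    intro i hi
    rw [hgP, Polynomial.derivative_C_mul, Polynomial.eval_mul, Polynomial.eval_C, hderiv]
    rw [Polynomial.eval_sub, Polynomial.eval_mul, Polynomial.eval_C, Polynomial.eval_pow,
      Polynomial.eval_X, hroot i hi, zero_sub]
    rw [mul_neg, ← mul_assoc, mul_inv_cancel₀ (hfact n), one_mul]
  -- product of roots
  have hprod_roots : ∏ i ∈ Finset.range n, a i = (-1 : ℂ) ^ n * (n.factorial : ℂ) := by
    have h1 : Polynomial.eval 0 g = (-1 : ℂ) ^ n * ∏ i ∈ Finset.range n, a i := by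
      rw [hg, Polynomial.eval_prod]
      simp only [Polynomial.eval_sub, Polynomial.eval_X, Polynomial.eval_C, zero_sub]
      rw [Finset.prod_congr rfl fun i _ => (neg_eq_neg_one_mul (a i)),
        Finset.prod_mul_distrib, Finset.prod_const, Finset.card_range]
    have h2 : Polynomial.eval 0 g = (n.factorial : ℂ) := by
      rw [hgP, Polynomial.eval_mul, Polynomial.eval_C, ← Polynomial.coeff_zero_eq_eval_zero,
        hcoeff]
      simp
    rw [h2] at h1
    have h3 : (-1 : ℂ) ^ n * (n.factorial : ℂ) =
        (-1 : ℂ) ^ n * ((-1 : ℂ) ^ n * ∏ i ∈ Finset.range n, a i) := by rw [← h1]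
    rw [← mul_assoc, ← pow_add,
      show ((-1 : ℂ)) ^ (n + n) = 1 from Even.neg_one_pow ⟨n, rfl⟩, one_mul] at h3
    exact h3.symm
  -- the key product computation
  have hU : ∏ q ∈ (Finset.range n ×ˢ Finset.range n).filter (fun q => q.1 ≠ q.2),
      (a q.1 - a q.2) = (n.factorial : ℂ) ^ n := by
    rw [prod_filter_ne n (fun q => a q.1 - a q.2)]
    have : ∀ i ∈ Finset.range n, ∏ j ∈ (Finset.range n).erase i, (a i - a j) =
        -(a i) ^ n := by
      intro i hi
      rw [← eval_derivative_prod (Finset.range n) a i hi, ← hg, hderiv_eval i hi]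
    rw [Finset.prod_congr rfl this]
    have : ∀ i ∈ Finset.range n, -(a i) ^ n = (-1 : ℂ) * (a i) ^ n := fun i _ => by ring
    rw [Finset.prod_congr rfl this, Finset.prod_mul_distrib, Finset.prod_const,
      Finset.card_range, Finset.prod_pow, hprod_roots, mul_pow, ← pow_mul, ← mul_assoc,
      ← pow_add]
    have heven : Even (n + n * n) := by
      have : n + n * n = n * (n + 1) := by ring
      rw [this]
      exact Nat.even_mul_succ_self n
    rw [Even.neg_one_pow heven, one_mul]
  have key : ∏ q ∈ (Finset.range n ×ˢ Finset.range n).filter (fun q => q.1 < q.2),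
      (a q.1 - a q.2) ^ 2 =
      (-1 : ℂ) ^ (n * (n - 1) / 2) * (n.factorial : ℂ) ^ n := by
    have hsq : ∀ q ∈ (Finset.range n ×ˢ Finset.range n).filter (fun q => q.1 < q.2),
        (a q.1 - a q.2) ^ 2 = (-1 : ℂ) * ((a q.1 - a q.2) * (a q.2 - a q.1)) := by
      intro q _; ring
    rw [Finset.prod_congr rfl hsq, Finset.prod_mul_distrib, Finset.prod_mul_distrib,
      Finset.prod_const]
    have hsign : ((Finset.range n ×ˢ Finset.range n).filter
        (fun q => q.1 < q.2)).card = n * (n - 1) / 2 := by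
      rw [Finset.card_eq_sum_ones, ← Finset.sum_range_id n]
      rw [show (fun (q : ℕ × ℕ) => (1 : ℕ)) = fun q => (fun (_ : ℕ × ℕ) => (1:ℕ)) q from rfl]
      rw [sum_filter_lt n (fun _ => (1 : ℕ))]
      exact Finset.sum_congr rfl fun j _ => by
        rw [Finset.sum_const, Finset.card_range, smul_eq_mul, mul_one]
    rw [hsign]
    have hswap : ∏ q ∈ (Finset.range n ×ˢ Finset.range n).filter (fun q => q.1 < q.2),
        (a q.2 - a q.1) =
        ∏ q ∈ (Finset.range n ×ˢ Finset.range n).filter (fun q => q.2 < q.1),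
        (a q.1 - a q.2) := prod_swap_lt n (fun q => a q.1 - a q.2)
    rw [hswap, ← Finset.prod_union (disjoint_filters n), union_filters n, hU]
  -- unfold polyDisc and conclude
  have hunfold : polyDisc (∑ k ∈ Finset.range (n + 1), C ((k.factorial : ℚ))⁻¹ * X ^ k) =
      ∏ q ∈ (Finset.range l.length ×ˢ Finset.range l.length).filter (fun q => q.1 < q.2),
        (l.getD q.1 0 - l.getD q.2 0) ^ 2 := by
    rw [polyDisc, hmap]
  rw [hunfold, hlen]
  exact key
end

section
/- Let n be a positive integer and p a prime with p ∤ n!. If K = ℚ(θ) where θ is a root of the irreducible polynomial f_n(x) = ∑_{k=0}^{n} (n!/k!)·x^k ∈ ℤ[x], then p does not divide the index [ℤ_K : ℤ[θ]]. -/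
open Polynomial NumberField

/-- The monic integer polynomial `n!` times the `n`-th Taylor polynomial of `exp`:
`f_n(x) = ∑_(k=0)^(n) (n!/k!) x^k`. -/
noncomputable def fInt (n : ℕ) : Polynomial ℤ :=
  ∑ k ∈ Finset.range (n + 1), C ((n.factorial / k.factorial : ℕ) : ℤ) * X ^ k

lemma fInt_eq (n : ℕ) : fInt n = X ^ n +
    ∑ k ∈ Finset.range n, C ((n.factorial / k.factorial : ℕ) : ℤ) * X ^ k := by
  rw [fInt, Finset.sum_range_succ, Nat.div_self n.factorial_pos]
  rw [Nat.cast_one, map_one, one_mul, add_comm]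

lemma fInt_aux_degree (n : ℕ) :
    (∑ k ∈ Finset.range n, C ((n.factorial / k.factorial : ℕ) : ℤ) * X ^ k).degree
      < (n : WithBot ℕ) := by
  apply lt_of_le_of_lt (Polynomial.degree_sum_le _ _)
  rw [Finset.sup_lt_iff (by exact_mod_cast WithBot.bot_lt_coe n)]
  intro k hk
  exact lt_of_le_of_lt (Polynomial.degree_C_mul_X_pow_le _ _)
    (by exact_mod_cast Finset.mem_range.mp hk)

lemma fInt_monic (n : ℕ) : (fInt n).Monic := by
  rw [fInt_eq]; exact Polynomial.monic_X_pow_add (fInt_aux_degree n)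

lemma fInt_degree (n : ℕ) : (fInt n).degree = n := by
  rw [fInt_eq, Polynomial.degree_add_eq_left_of_degree_lt, degree_X_pow]
  rw [degree_X_pow]; exact fInt_aux_degree n

lemma fInt_natDegree (n : ℕ) : (fInt n).natDegree = n :=
  Polynomial.natDegree_eq_of_degree_eq_some (fInt_degree n)

lemma fInt_coeff_zero (n : ℕ) : (fInt n).coeff 0 = (n.factorial : ℤ) := by
  simp [fInt, Polynomial.finset_sum_coeff, Polynomial.coeff_X_pow, Nat.factorial]

lemma fact_div_succ_mul {j n : ℕ} (h : j < n) :
    n.factorial / (j+1).factorial * (j+1) = n.factorial / j.factorial := by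
  rw [Nat.factorial_succ, mul_comm (j+1), ← Nat.div_div_eq_div_mul,
    Nat.div_mul_cancel]
  refine (Nat.dvd_div_iff_mul_dvd (Nat.factorial_dvd_factorial h.le)).mpr ?_
  rw [mul_comm]
  exact Nat.factorial_succ j ▸ Nat.factorial_dvd_factorial h

lemma fInt_derivative (n : ℕ) : derivative (fInt n) = fInt n - X ^ n := by
  conv_rhs => rw [fInt_eq, add_sub_cancel_left]
  rw [fInt, derivative_sum]
  rw [Finset.sum_range_succ']
  simp only [derivative_C_mul_X_pow]
  simp only [Nat.add_sub_cancel, Nat.cast_zero, mul_zero, map_zero, zero_mul, add_zero,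
    pow_zero]
  refine Finset.sum_congr rfl fun j hj => ?_
  rw [← Nat.cast_mul, fact_div_succ_mul (Finset.mem_range.mp hj)]

/-- The index `[ℤ_K : ℤ[θ]]` of the order `ℤ[θ]` in the ring of integers of `K`. -/
noncomputable def subIdx {K : Type*} [Field K] [NumberField K] (θ : 𝓞 K) : ℕ :=
  (Subalgebra.toSubmodule (Algebra.adjoin ℤ ({θ} : Set (𝓞 K)))).toAddSubgroup.index

set_option maxHeartbeats 1000000 in
/-- If `p ∤ n!` then `p` does not divide the index `[ℤ_K : ℤ[θ]]`. -/
theorem not_dvd_index_of_not_dvd_factorial {K : Type*} [Field K] [NumberField K]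
    (n p : ℕ) (hn : 0 < n) (hp : p.Prime) (θ : 𝓞 K)
    (hroot : Polynomial.aeval θ (fInt n) = 0)
    (hgen : Algebra.adjoin ℚ ({(θ : K)} : Set K) = ⊤)
    (hirr : Irreducible (fInt n))
    (hpn : ¬ p ∣ n.factorial) :
    ¬ p ∣ subIdx θ := by
  intro hdvd
  have hK : IsIntegral ℤ (θ : K) := RingOfIntegers.isIntegral_coe θ
  have hintZ : IsIntegral ℤ θ := ⟨fInt n, fInt_monic n, hroot⟩
  have hminZ : minpoly ℤ θ = fInt n := by
    obtain ⟨q, hq⟩ := minpoly.isIntegrallyClosed_dvd hintZ hroot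
    rcases hirr.isUnit_or_isUnit hq with h | h
    · exact absurd (minpoly.irreducible hintZ).not_isUnit (by simpa using h)
    · exact Polynomial.eq_of_monic_of_associated (minpoly.monic hintZ) (fInt_monic n)
        ⟨h.unit, by rw [IsUnit.unit_spec, ← hq]⟩
  have hminZK : minpoly ℤ (θ : K) = fInt n := by
    rw [show ((θ : K)) = algebraMap (𝓞 K) K θ from rfl,
      minpoly.algebraMap_eq RingOfIntegers.coe_injective, hminZ]
  have hminQ : minpoly ℚ (θ : K) = (fInt n).map (algebraMap ℤ ℚ) := by
    rw [minpoly.isIntegrallyClosed_eq_field_fractions' ℚ hK, hminZK]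
  have hintQ : IsIntegral ℚ (θ : K) := .of_finite ℚ _
  let B : PowerBasis ℚ K :=
    (Algebra.adjoin.powerBasis hintQ).map
      ((Subalgebra.equivOfEq _ _ hgen).trans Subalgebra.topEquiv)
  have hBgen : B.gen = (θ : K) := by
    simp [B, Algebra.adjoin.powerBasis_gen]
  have hdim : B.dim = n := by
    rw [← PowerBasis.natDegree_minpoly B, hBgen, hminQ,
      (fInt_monic n).natDegree_map, fInt_natDegree]
  have hfr : Module.finrank ℚ K = n := by rw [B.finrank, hdim]
  have haevalK : aeval (θ : K) (fInt n) = 0 := by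
    have h := congrArg (algebraMap (𝓞 K) K) hroot
    rw [map_zero] at h
    rwa [show ((θ : K)) = algebraMap (𝓞 K) K θ from rfl, aeval_algebraMap_apply]
  have hder : aeval (θ : K) (derivative (minpoly ℚ (θ : K))) = -(θ : K) ^ n := by
    rw [hminQ, derivative_map, aeval_map_algebraMap, fInt_derivative, map_sub,
      haevalK, map_pow, aeval_X, zero_sub]
  have hnormθ : Algebra.norm ℚ (θ : K) = (-1) ^ n * (n.factorial : ℚ) := by
    have h := Algebra.PowerBasis.norm_gen_eq_coeff_zero_minpoly B
    rw [hBgen, hdim, hminQ, coeff_map, fInt_coeff_zero] at h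
    rw [h]; push_cast; ring
  set m : ℤ := (-1) ^ (n * (n - 1) / 2) * ((-1) ^ n * ((-1) ^ n * (n.factorial : ℤ)) ^ n)
    with hm
  have hdm : Algebra.discr ℚ B.basis = (m : ℚ) := by
    have h := Algebra.discr_powerBasis_eq_norm (pb := B)
    rw [hBgen, hder, hfr] at h
    rw [h, show -(θ : K) ^ n = algebraMap ℚ K (-1) * (θ : K) ^ n by
        rw [map_neg, map_one, neg_one_mul],
      map_mul, map_pow, Algebra.norm_algebraMap, hnormθ, hfr, hm]
    push_cast; ring
  have hmabs : m.natAbs = n.factorial ^ n := by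
    have h : m = (-1) ^ (n * (n - 1) / 2 + n + n * n) * (n.factorial : ℤ) ^ n := by
      rw [hm]; ring
    rw [h, Int.natAbs_mul, Int.natAbs_pow, Int.natAbs_pow, Int.natAbs_neg,
      Int.natAbs_one, one_pow, one_mul, Int.natAbs_natCast]
  have hsmul : ∀ z : 𝓞 K, m • z ∈ Algebra.adjoin ℤ ({θ} : Set (𝓞 K)) := by
    intro z
    have h1 : Algebra.discr ℚ B.basis • (z : K) ∈ Algebra.adjoin ℤ ({B.gen} : Set K) :=
      Algebra.discr_mul_isIntegral_mem_adjoin (R := ℤ)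
        (hint := show IsIntegral ℤ B.gen by rw [hBgen]; exact hK)
        (hz := RingOfIntegers.isIntegral_coe z)
    rw [hBgen, hdm] at h1
    have h2 : algebraMap (𝓞 K) K (m • z) ∈ Algebra.adjoin ℤ ({(θ : K)} : Set K) := by
      have he : (m : ℚ) • (z : K) = algebraMap (𝓞 K) K (m • z) := by
        rw [Int.cast_smul_eq_zsmul, map_zsmul]
      rwa [he] at h1
    rw [show ({(θ : K)} : Set K) = (IsScalarTower.toAlgHom ℤ (𝓞 K) K) '' {θ} by
        simp, ← AlgHom.map_adjoin] at h2
    obtain ⟨y, hy, hyz⟩ := h2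
    rwa [RingOfIntegers.coe_injective hyz] at hy
  set H := (Subalgebra.toSubmodule (Algebra.adjoin ℤ ({θ} : Set (𝓞 K)))).toAddSubgroup with hH
  have hm0 : ∀ q : 𝓞 K ⧸ H, m • q = 0 := by
    intro q
    induction q using QuotientAddGroup.induction_on with
    | H z =>
      rw [← QuotientAddGroup.mk_zsmul, QuotientAddGroup.eq_zero_iff]
      exact hsmul z
  have hQtor : AddMonoid.IsTorsion (𝓞 K ⧸ H) := by
    intro q
    rw [isOfFinAddOrder_iff_nsmul_eq_zero]
    refine ⟨m.natAbs, ?_, ?_⟩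
    · rw [hmabs]; exact pow_pos n.factorial_pos n
    · rcases Int.natAbs_eq m with h | h
      · rw [← natCast_zsmul, ← h, hm0]
      · have : m • q = 0 := hm0 q
        rw [h, neg_zsmul, natCast_zsmul] at this
        exact neg_eq_zero.mp this
  haveI : AddGroup.FG (𝓞 K) := Module.Finite.iff_addGroup_fg.mp inferInstance
  haveI : Finite (𝓞 K ⧸ H) := AddCommGroup.finite_of_fg_torsion _ hQtor
  haveI : Fintype (𝓞 K ⧸ H) := Fintype.ofFinite _
  haveI : Fact p.Prime := ⟨hp⟩
  have hcard : p ∣ Fintype.card (𝓞 K ⧸ H) := by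
    rw [← Nat.card_eq_fintype_card, ← AddSubgroup.index_eq_card]
    exact hdvd
  obtain ⟨g, hg⟩ := exists_prime_addOrderOf_dvd_card p hcard
  have hpdvd : (p : ℤ) ∣ m := by
    rw [← hg]
    exact addOrderOf_dvd_iff_zsmul_eq_zero.mpr (hm0 g)
  have : p ∣ n.factorial ^ n := by
    have := Int.natAbs_dvd_natAbs.mpr hpdvd
    rwa [Int.natAbs_natCast, hmabs] at this
  exact hpn (hp.dvd_of_dvd_pow this)
end
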